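/- Let B be an n×n symmetric matrix over a field F. Then rank B = max{k : B has a nonzero quasi-principal minor of order k}, where the maximum over the empty set is defined to be 0. In particular, the rank of B equals the index of the last term of qpr(B) that is A or S (and is 0 if no such term exists). -/

import Mathlib

open Matrix

/-- The minor of a square matrix `B` lying in the rows indexed by `α` and the columns
indexed by `β` (each listed in increasing order); junk value `0` if `α.card ≠ β.card`. -/
def qMinor {R : Type*} [CommRing R] {m : Type*} [Fintype m] [LinearOrder m]
    (B : Matrix m m R) (α β : Finset m) : R :=
  if h : β.card = α.card then
    (Matrix.of fun i j : Fin α.card =>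
      B (α.orderEmbOfFin rfl i) (β.orderEmbOfFin h j)).det
  else 0

/-- `α` and `β` index a quasi-principal submatrix of order `k`, i.e.
`|α| = |β| = k` and `k - 1 ≤ |α ∩ β| (≤ k)`. -/
def IsQPPair {m : Type*} [DecidableEq m] (k : ℕ) (α β : Finset m) : Prop :=
  α.card = k ∧ β.card = k ∧ k - 1 ≤ (α ∩ β).card

/-- All quasi-principal minors of `B` of order `k` are nonzero. -/
def QPAllNonzero {R : Type*} [CommRing R] {m : Type*} [Fintype m] [LinearOrder m]
    (B : Matrix m m R) (k : ℕ) : Prop :=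
  ∀ α β : Finset m, IsQPPair k α β → qMinor B α β ≠ 0

/-- All quasi-principal minors of `B` of order `k` are zero. -/
def QPAllZero {R : Type*} [CommRing R] {m : Type*} [Fintype m] [LinearOrder m]
    (B : Matrix m m R) (k : ℕ) : Prop :=
  ∀ α β : Finset m, IsQPPair k α β → qMinor B α β = 0

/-- The three possible letters of a qpr-sequence. -/
inductive QPR : Type
  | A
  | S
  | N
deriving DecidableEq

open Classical in
/-- The letter of the qpr-sequence of `B` corresponding to order `k`:
`A` if all quasi-principal minors of order `k` are nonzero, `N` if all are zero,
and `S` otherwise. -/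
noncomputable def qprEntry {R : Type*} [CommRing R] {m : Type*} [Fintype m] [LinearOrder m]
    (B : Matrix m m R) (k : ℕ) : QPR :=
  if QPAllNonzero B k then QPR.A
  else if QPAllZero B k then QPR.N
  else QPR.S

/-- A sequence of letters `q 0, …, q (n-1)` (standing for `q_1 ⋯ q_n`) is attainable
over `F` if it is the qpr-sequence of an `n × n` symmetric matrix over `F`. -/
def Attainable (F : Type*) [Field F] {n : ℕ} (q : Fin n → QPR) : Prop :=
  ∃ B : Matrix (Fin n) (Fin n) F, B.IsSymm ∧ ∀ k : Fin n, qprEntry B ((k : ℕ) + 1) = q k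

/-- The Schur complement `B/B[γ] = B[γᶜ] - B[γᶜ, γ] B[γ]⁻¹ B[γ, γᶜ]`,
with rows and columns indexed by `γᶜ` (indexing inherited from `B`). -/
noncomputable def schurCompl {R : Type*} [CommRing R] {n : ℕ}
    (B : Matrix (Fin n) (Fin n) R) (γ : Finset (Fin n)) :
    Matrix ↥(γᶜ) ↥(γᶜ) R :=
  B.submatrix (fun i : ↥(γᶜ) => (i : Fin n)) (fun j : ↥(γᶜ) => (j : Fin n)) -
    B.submatrix (fun i : ↥(γᶜ) => (i : Fin n)) (fun j : ↥γ => (j : Fin n)) *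
      (B.submatrix (fun i : ↥γ => (i : Fin n)) fun j : ↥γ => (j : Fin n))⁻¹ *
      B.submatrix (fun i : ↥γ => (i : Fin n)) fun j : ↥(γᶜ) => (j : Fin n)

/-- The `(m+1) × (m+1)` matrix with block form `[[A, x], [yᵀ, b]]`. -/
def borderMat {R : Type*} [CommRing R] {m : ℕ} (A : Matrix (Fin m) (Fin m) R)
    (x y : Fin m → R) (b : R) : Matrix (Fin (m + 1)) (Fin (m + 1)) R :=
  Matrix.of fun i j =>
    if hi : (i : ℕ) < m then
      if hj : (j : ℕ) < m then A ⟨i, hi⟩ ⟨j, hj⟩ else x ⟨i, hi⟩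
    else
      if hj : (j : ℕ) < m then y ⟨j, hj⟩ else b

section AuxStmt5

open Module Submodule

variable {F : Type*} [Field F]

lemma auxRankSubCol {p n k : ℕ} (A : Matrix (Fin p) (Fin n) F) (g : Fin k → Fin n) :
    (A.submatrix id g).rank ≤ A.rank := by
  rw [Matrix.rank_eq_finrank_span_cols, Matrix.rank_eq_finrank_span_cols]
  refine Submodule.finrank_mono (Submodule.span_mono ?_)
  rintro _ ⟨j, rfl⟩
  exact ⟨g j, rfl⟩

lemma auxRankSub {p n k l : ℕ} (A : Matrix (Fin p) (Fin n) F) (f : Fin k → Fin p)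
    (g : Fin l → Fin n) : (A.submatrix f g).rank ≤ A.rank := by
  have h1 : (A.submatrix f g) = (A.submatrix f id).submatrix id g := by
    ext i j; rfl
  have h2 : (A.submatrix f id) = (Aᵀ.submatrix id f)ᵀ := by ext i j; rfl
  calc (A.submatrix f g).rank ≤ (A.submatrix f id).rank := by
        rw [h1]; exact auxRankSubCol _ g
    _ = (Aᵀ.submatrix id f).rank := by rw [h2, Matrix.rank_transpose]
    _ ≤ Aᵀ.rank := auxRankSubCol _ f
    _ = A.rank := Matrix.rank_transpose A

lemma auxDetNeZero {k : ℕ} (A : Matrix (Fin k) (Fin k) F) (h : A.rank = k) :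
    A.det ≠ 0 := by
  intro h0
  obtain ⟨v, hv, hmul⟩ := (Matrix.exists_mulVec_eq_zero_iff).mpr h0
  have hsum := LinearMap.finrank_range_add_finrank_ker A.mulVecLin
  rw [show Matrix.rank A = finrank F (LinearMap.range A.mulVecLin) from rfl] at h
  rw [h, Module.finrank_pi, Fintype.card_fin] at hsum
  have hker : finrank F (LinearMap.ker A.mulVecLin) = 0 := by omega
  have hbot : LinearMap.ker A.mulVecLin = ⊥ := Submodule.finrank_eq_zero.mp hker
  have hvker : v ∈ LinearMap.ker A.mulVecLin := by
    simp [LinearMap.mem_ker, Matrix.mulVecLin_apply, hmul]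
  rw [hbot] at hvker
  exact hv (by simpa using hvker)

lemma auxExistsPrincipal {n : ℕ} (B : Matrix (Fin n) (Fin n) F)
    (hB : B.IsSymm) :
    ∃ α : Finset (Fin n), α.card = B.rank ∧
      (B.submatrix (α.orderEmbOfFin rfl) (α.orderEmbOfFin rfl)).det ≠ 0 := by
  classical
  obtain ⟨t, hts, hsp, hli⟩ := exists_linearIndependent F (Set.range B.col)
  have htfin : t.Finite := (Set.finite_range B.col).subset hts
  haveI : Fintype t := htfin.fintype
  choose f hf using fun v : t => hts v.2
  have hfinj : Function.Injective f := fun v w h => Subtype.ext (by rw [← hf v, ← hf w, h])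
  set α : Finset (Fin n) := Finset.univ.image f with hα
  have himg : B.col '' ↑α = t := by
    rw [hα, Finset.coe_image, Finset.coe_univ, Set.image_univ, ← Set.range_comp]
    rw [show B.col ∘ f = Subtype.val from funext hf, Subtype.range_coe]
  have hrank : B.rank = Fintype.card t := by
    rw [Matrix.rank_eq_finrank_span_cols, ← hsp, finrank_span_set_eq_card hli,
      Set.toFinset_card]
  have hcard : α.card = B.rank := by
    rw [hrank, hα, Finset.card_image_of_injective _ hfinj, Finset.card_univ]
  set g : Fin α.card → Fin n := ⇑(α.orderEmbOfFin rfl) with hg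
  have hrangeg : Set.range g = ↑α := α.range_orderEmbOfFin rfl
  set π : (Fin n → F) →ₗ[F] (Fin α.card → F) := LinearMap.funLeft F F g with hπ
  have hMrank : (B.submatrix (id : Fin n → Fin n) g).rank = B.rank := by
    rw [Matrix.rank_eq_finrank_span_cols (B.submatrix _ g), Matrix.rank_eq_finrank_span_cols]
    have h0 : (B.submatrix (id : Fin n → Fin n) g).col = B.col ∘ g := by
      funext j i; simp
    rw [h0, Set.range_comp, hrangeg, himg, hsp]
  have hPM : (B.submatrix g (id : Fin n → Fin n))ᵀ = B.submatrix (id : Fin n → Fin n) g := by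
    funext j i
    simp only [Matrix.transpose_apply, Matrix.submatrix_apply, id_eq]
    exact (hB.apply (g i) j).symm
  have hP : (B.submatrix g (id : Fin n → Fin n)).col = ⇑π ∘ B.col := by
    funext j; ext i
    simp [hπ, LinearMap.funLeft_apply]
  have hmap : finrank F ((span F (Set.range B.col)).map π) = B.rank := by
    rw [← Submodule.span_image, ← Set.range_comp, ← hP,
      ← Matrix.rank_eq_finrank_span_cols, ← Matrix.rank_transpose (B.submatrix g _), hPM, hMrank]
  have hNrank : (B.submatrix g g).rank = B.rank := by
    rw [Matrix.rank_eq_finrank_span_cols]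
    have hN : (B.submatrix g g).col = ⇑π ∘ B.col ∘ g := by
      funext j; ext i
      simp [hπ, LinearMap.funLeft_apply]
    rw [hN, Set.range_comp, Set.range_comp, hrangeg, himg, Submodule.span_image, hsp, hmap]
  exact ⟨α, hcard, auxDetNeZero _ (by rw [hNrank, ← hcard])⟩

lemma auxQPIndep {m : Type*} {i1 i2 : DecidableEq m} {k : ℕ} {α β : Finset m}
    (h : @IsQPPair m i1 k α β) : @IsQPPair m i2 k α β := by
  cases Subsingleton.elim i1 i2
  exact h

lemma auxQPLeRank {n : ℕ} (B : Matrix (Fin n) (Fin n) F) {k : ℕ}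
    {α β : Finset (Fin n)} (hqp : IsQPPair k α β) (hne : qMinor B α β ≠ 0) :
    k ≤ B.rank := by
  obtain ⟨hα, hβ, -⟩ := hqp
  have h : β.card = α.card := hβ.trans hα.symm
  unfold qMinor at hne
  rw [dif_pos h] at hne
  have hdet : (B.submatrix (⇑(α.orderEmbOfFin rfl)) (⇑(β.orderEmbOfFin h))).det ≠ 0 := hne
  have hunit : IsUnit (B.submatrix (⇑(α.orderEmbOfFin rfl)) (⇑(β.orderEmbOfFin h))) :=
    (Matrix.isUnit_iff_isUnit_det _).mpr (isUnit_iff_ne_zero.mpr hdet)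
  have h1 := Matrix.rank_of_isUnit _ hunit
  have h2 := auxRankSub B (⇑(α.orderEmbOfFin rfl)) (⇑(β.orderEmbOfFin h))
  rw [h1, Fintype.card_fin] at h2
  omega

end AuxStmt5


/-- the rank of a symmetric matrix `B` equals the largest order of a nonzero
quasi-principal minor of `B` (with the maximum over the empty set being `0`); in
particular, it equals the index of the last term of `qpr(B)` that is `A` or `S`
(and is `0` if there is no such term). -/
theorem stmt_5 {F : Type*} [Field F] {n : ℕ} (B : Matrix (Fin n) (Fin n) F)
    (hB : B.IsSymm) :
    B.rank = sSup {k : ℕ | 1 ≤ k ∧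
        ∃ α β : Finset (Fin n), IsQPPair k α β ∧ qMinor B α β ≠ 0} ∧
      B.rank = sSup {k : ℕ | 1 ≤ k ∧ k ≤ n ∧ qprEntry B k ≠ QPR.N} := by
  classical
  set S := {k : ℕ | 1 ≤ k ∧ ∃ α β : Finset (Fin n), IsQPPair k α β ∧ qMinor B α β ≠ 0}
    with hS
  have hub : ∀ k ∈ S, k ≤ B.rank := by
    rintro k ⟨-, α, β, hqp, hne⟩
    exact auxQPLeRank B hqp hne
  have hmain : B.rank = sSup S := by
    rcases Nat.eq_zero_or_pos B.rank with hr | hr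
    · have hemp : S = ∅ := Set.eq_empty_iff_forall_notMem.mpr (fun k hk => by
        have h1 := hub k hk
        have h2 : 1 ≤ k := hk.1
        omega)
      rw [hemp, hr, csSup_empty]
      rfl
    · obtain ⟨α, hcard, hdet⟩ := auxExistsPrincipal B hB
      have hmem : B.rank ∈ S := by
        refine ⟨hr, α, α, ⟨hcard, hcard, ?_⟩, ?_⟩
        · rw [Finset.inter_self, hcard]; omega
        · unfold qMinor
          rw [dif_pos rfl]
          exact hdet
      exact le_antisymm (le_csSup ⟨B.rank, hub⟩ hmem) (csSup_le ⟨_, hmem⟩ hub)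
  have hsets : {k : ℕ | 1 ≤ k ∧ k ≤ n ∧ qprEntry B k ≠ QPR.N} = S := by
    ext k
    simp only [hS, Set.mem_setOf_eq]
    constructor
    · rintro ⟨h1, hn, hq⟩
      refine ⟨h1, ?_⟩
      obtain ⟨α, hsub, hαc⟩ := Finset.exists_subset_card_eq
        (s := (Finset.univ : Finset (Fin n))) (by simpa using hn)
      have hqp : IsQPPair k α α := ⟨hαc, hαc, by rw [Finset.inter_self, hαc]; omega⟩
      rw [qprEntry] at hq
      split_ifs at hq with hA hZ
      · exact ⟨α, α, hqp, hA α α (auxQPIndep hqp)⟩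
      · exact absurd rfl hq
      · unfold QPAllZero at hZ
        push_neg at hZ
        obtain ⟨α', β', hqp', hne'⟩ := hZ
        exact ⟨α', β', auxQPIndep hqp', hne'⟩
    · rintro ⟨h1, α, β, hqp, hne⟩
      have hZ : ¬ QPAllZero B k := fun h => hne (h α β (auxQPIndep hqp))
      refine ⟨h1, ?_, ?_⟩
      · have := Finset.card_le_univ α
        have hαk : α.card = k := hqp.1
        simpa [hαk] using this
      · by_cases hA1 : QPAllNonzero B k
        · rw [qprEntry, if_pos hA1]; simp
        · rw [qprEntry, if_neg hA1, if_neg hZ]; simp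
  exact ⟨hmain, by rw [hsets]; exact hmain⟩
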